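/- arXiv:0803.2593 — 2 statements merged into one kernel-verified Lean document; each statement's English description precedes it below -/
import Mathlib

section
/- With U unitary on H₀ ⊗ H, β = |X₀⟩⟨X₀|, ρ a density operator on H₀, and P_i an orthogonal projection on H with matrix entries p^i_{kl} = ⟨X_k, P_i X_l⟩ in the basis (X₀,...,X_N), the partial trace over H of (I⊗P_i) U (ρ⊗β) U* (I⊗P_i) equals Σ_{0≤k,l≤N} p^i_{kl} U_{k0} ρ U_{l0}*, where U_{kl} are the block entries of U in the basis Ω_m ⊗ X_k. -/
open Matrix
open scoped Kronecker ComplexOrder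


private lemma trace_stdBasis_mul {n : Type*} [Fintype n] [DecidableEq n]
    (M : Matrix n n ℂ) (i j : n) :
    (Matrix.single i j (1:ℂ) * M).trace = M j i := by
  simp [Matrix.trace, Matrix.diag, Matrix.mul_apply, Matrix.single, ite_and,
    Finset.sum_ite_eq, Finset.sum_ite_eq']

private lemma hH_lemma (N : ℕ) (P : Matrix (Fin (N + 1)) (Fin (N + 1)) ℂ) (hPidem : P * P = P)
    (k l k' l' : Fin (N+1)) :
    (P * Matrix.single k l (1:ℂ) * Matrix.single (0 : Fin (N+1)) 0 (1:ℂ) *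
      Matrix.single l' k' (1:ℂ) * P).trace
    = if l = 0 ∧ l' = 0 then P k' k else 0 := by
  by_cases hl : l = 0
  · subst hl
    rw [mul_assoc P, Matrix.single_mul_single_same]
    by_cases hl' : l' = 0
    · subst hl'
      rw [mul_assoc P, Matrix.single_mul_single_same, mul_one, mul_one,
        Matrix.trace_mul_cycle, hPidem, trace_mul_comm, trace_stdBasis_mul]
      simp
    · rw [mul_assoc P, Matrix.single_mul_single_of_ne (h := fun h : (0 : Fin (N+1)) = l' => hl' h.symm)]
      simp [hl']
  · rw [mul_assoc P, Matrix.single_mul_single_of_ne (h := hl)]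
    simp [hl]

private lemma key_trace (K N : ℕ)
    (B : Fin (N+1) → Fin (N+1) → Matrix (Fin (K+1)) (Fin (K+1)) ℂ)
    (ρ X : Matrix (Fin (K+1)) (Fin (K+1)) ℂ)
    (P : Matrix (Fin (N+1)) (Fin (N+1)) ℂ) (hPidem : P * P = P) :
    ((((1 : Matrix (Fin (K+1)) (Fin (K+1)) ℂ) ⊗ₖ P) *
        (∑ k : Fin (N+1), ∑ l : Fin (N+1), B k l ⊗ₖ Matrix.single k l (1:ℂ)) *
        (ρ ⊗ₖ Matrix.single (0 : Fin (N+1)) 0 (1:ℂ)) *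
        (∑ k : Fin (N+1), ∑ l : Fin (N+1), B k l ⊗ₖ Matrix.single k l (1:ℂ))ᴴ *
        ((1 : Matrix (Fin (K+1)) (Fin (K+1)) ℂ) ⊗ₖ P)) *
      (X ⊗ₖ (1 : Matrix (Fin (N+1)) (Fin (N+1)) ℂ))).trace
    = ∑ k : Fin (N+1), ∑ l : Fin (N+1), P l k * ((B k 0 * ρ * (B l 0)ᴴ) * X).trace := by
  have hct : (∑ k : Fin (N+1), ∑ l : Fin (N+1), B k l ⊗ₖ Matrix.single k l (1:ℂ))ᴴ
      = ∑ k : Fin (N+1), ∑ l : Fin (N+1), (B k l)ᴴ ⊗ₖ Matrix.single l k (1:ℂ) := by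
    ext ⟨a, i⟩ ⟨b, j⟩
    simp [Matrix.conjTranspose_apply, Matrix.sum_apply, Matrix.kroneckerMap_apply,
      Matrix.single, ite_and, Finset.sum_ite_eq, Finset.sum_ite_eq']
  rw [hct]
  simp only [Finset.mul_sum, Finset.sum_mul, Matrix.trace_sum,
    Matrix.one_mul, Matrix.mul_one, Matrix.trace_kronecker, ← Matrix.mul_kronecker_mul]
  simp only [hH_lemma N P hPidem, mul_ite, mul_zero, ite_and, Finset.sum_ite_irrel,
    Finset.sum_const_zero, Finset.sum_ite_eq', Finset.mem_univ, if_true]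
  rw [Finset.sum_comm]
  exact Finset.sum_congr rfl fun k _ => Finset.sum_congr rfl fun l _ => mul_comm _ _

/-- With `U` unitary on `H₀ ⊗ H`, `β = |X₀⟩⟨X₀|` the projection on the
first basis vector of `H`, `ρ` a density operator on `H₀` and `P` an orthogonal
projection on `H`, the partial trace over `H` of `(I⊗P) U (ρ⊗β) U* (I⊗P)` equals
`Σ_{k,l} p_{kl} U_{k0} ρ U_{l0}*`, where `p_{kl} = ⟨X_k, P X_l⟩` (inner product linear
in its first argument, i.e. the `(l,k)` matrix entry of `P`) and `U_{ij}` are the block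
entries of `U`. -/
theorem partial_trace_measurement_blocks (K N : ℕ)
    (U : Matrix (Fin (K + 1) × Fin (N + 1)) (Fin (K + 1) × Fin (N + 1)) ℂ)
    (hU : Uᴴ * U = 1) (hU' : U * Uᴴ = 1)
    (ρ : Matrix (Fin (K + 1)) (Fin (K + 1)) ℂ) (hρ : ρ.PosSemidef) (hρtr : ρ.trace = 1)
    (P : Matrix (Fin (N + 1)) (Fin (N + 1)) ℂ)
    (hPherm : Pᴴ = P) (hPidem : P * P = P)
    (η : Matrix (Fin (K + 1)) (Fin (K + 1)) ℂ)
    (hη : ∀ X : Matrix (Fin (K + 1)) (Fin (K + 1)) ℂ,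
      (η * X).trace =
        ((((1 : Matrix (Fin (K + 1)) (Fin (K + 1)) ℂ) ⊗ₖ P) * U *
            (ρ ⊗ₖ Matrix.single (0 : Fin (N + 1)) (0 : Fin (N + 1)) (1 : ℂ)) * Uᴴ *
            ((1 : Matrix (Fin (K + 1)) (Fin (K + 1)) ℂ) ⊗ₖ P)) *
          (X ⊗ₖ (1 : Matrix (Fin (N + 1)) (Fin (N + 1)) ℂ))).trace) :
    η = ∑ k : Fin (N + 1), ∑ l : Fin (N + 1),
        P l k • (Matrix.of (fun a b => U (a, k) (b, 0)) * ρ *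
          (Matrix.of (fun a b => U (a, l) (b, 0)))ᴴ) := by
  have hUdec : U = ∑ k : Fin (N+1), ∑ l : Fin (N+1),
      (Matrix.of fun a b => U (a, k) (b, l)) ⊗ₖ Matrix.single k l (1:ℂ) := by
    ext ⟨a, i⟩ ⟨b, j⟩
    simp [Matrix.sum_apply, Matrix.kroneckerMap_apply, Matrix.single, ite_and,
      Finset.sum_ite_eq, Finset.sum_ite_eq']
  have main : ∀ X, (η * X).trace =
      ((∑ k : Fin (N+1), ∑ l : Fin (N+1),
        P l k • (Matrix.of (fun a b => U (a, k) (b, 0)) * ρ *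
          (Matrix.of (fun a b => U (a, l) (b, 0)))ᴴ)) * X).trace := by
    intro X
    rw [hη X]
    conv_lhs => rw [hUdec]
    rw [key_trace K N (fun k l => Matrix.of fun a b => U (a, k) (b, l)) ρ X P hPidem]
    simp [Finset.sum_mul, Matrix.trace_sum, smul_mul_assoc, Matrix.trace_smul, smul_eq_mul]
  ext a b
  have h := main (Matrix.single b a 1)
  rwa [trace_mul_comm, trace_stdBasis_mul, trace_mul_comm, trace_stdBasis_mul] at h
end

section
/- Let (ρ_n(t))_{t≥0} be defined by ρ_n(t) = ρ_{[nt]} from a discrete process (ρ_k) adapted to (M_k^{(n)}) satisfying E[‖ρ_l - ρ_r‖² | M_r^{(n)}] ≤ K(l-r)/n a.s. for all r < l. Then for all t₁ < t < t₂: E[‖ρ_n(t₂) - ρ_n(t)‖² · ‖ρ_n(t) - ρ_n(t₁)‖²] ≤ 4K² (t₂ - t₁)². -/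
open MeasureTheory Filter

/-- If the discrete process `(ρ_k)` adapted to `(M_k^{(n)})` satisfies
`E[‖ρ_l - ρ_r‖² | M_r^{(n)}] ≤ K (l - r)/n` a.s. for all `r < l`, then the
piecewise-constant interpolation `ρ_n(t) = ρ_{[nt]}` satisfies, for all `t₁ < t < t₂`,
the tightness estimate
`E[‖ρ_n(t₂) - ρ_n(t)‖² ‖ρ_n(t) - ρ_n(t₁)‖²] ≤ 4 K² (t₂ - t₁)²`. -/
theorem tightness_estimate (P n : ℕ) (hn : 0 < n) (K : ℝ)
    {Ω : Type*} {mΩ : MeasurableSpace Ω} (μ : Measure Ω) [IsProbabilityMeasure μ]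
    (F : Filtration ℕ mΩ)
    (ρ : ℕ → Ω → EuclideanSpace ℝ (Fin P)) (hadapted : Adapted F ρ)
    (D : ℝ) (hbdd : ∀ k ω, ‖ρ k ω‖ ≤ D)
    (hbound : ∀ r l : ℕ, r < l → ∀ᵐ ω ∂μ,
      (μ[(fun ω => ‖ρ l ω - ρ r ω‖ ^ 2)|F r]) ω ≤ K * (l - r : ℝ) / n) :
    ∀ t₁ t t₂ : ℝ, 0 ≤ t₁ → t₁ < t → t < t₂ →
      ∫ ω, ‖ρ ⌊(n : ℝ) * t₂⌋₊ ω - ρ ⌊(n : ℝ) * t⌋₊ ω‖ ^ 2 *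
          ‖ρ ⌊(n : ℝ) * t⌋₊ ω - ρ ⌊(n : ℝ) * t₁⌋₊ ω‖ ^ 2 ∂μ ≤
        4 * K ^ 2 * (t₂ - t₁) ^ 2 := by
  intro t₁ t t₂ ht₁ h12 h23
  have hn' : (0:ℝ) < n := by exact_mod_cast hn
  set a := ⌊(n : ℝ) * t₁⌋₊ with ha
  set b := ⌊(n : ℝ) * t⌋₊ with hb
  set c := ⌊(n : ℝ) * t₂⌋₊ with hc
  have hab : a ≤ b := Nat.floor_mono (by nlinarith)
  have hbc : b ≤ c := Nat.floor_mono (by nlinarith)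
  have hRHS : (0:ℝ) ≤ 4 * K ^ 2 * (t₂ - t₁) ^ 2 := by positivity
  rcases eq_or_lt_of_le hbc with hbceq | hbc'
  · simp only [← hbceq, sub_self, norm_zero]
    norm_num
    exact hRHS
  rcases eq_or_lt_of_le hab with habeq | hab'
  · simp only [habeq, sub_self, norm_zero]
    norm_num
    exact hRHS
  -- now a < b < c
  -- K is nonnegative
  have hK : 0 ≤ K := by
    have h1 := hbound 0 1 one_pos
    have h2 : (0 : Ω → ℝ) ≤ᵐ[μ] μ[(fun ω => ‖ρ 1 ω - ρ 0 ω‖ ^ 2)|F 0] :=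
      condExp_nonneg (ae_of_all _ fun ω => by positivity)
    obtain ⟨ω, hω1, hω2⟩ := (h1.and h2).exists
    have h3 : (0:ℝ) ≤ K / n := by
      have := le_trans hω2 hω1
      simpa using this
    have h4 := mul_nonneg h3 hn'.le
    rwa [div_mul_cancel₀ _ (ne_of_gt hn')] at h4
  set f : Ω → ℝ := fun ω => ‖ρ b ω - ρ a ω‖ ^ 2 with hf
  set g : Ω → ℝ := fun ω => ‖ρ c ω - ρ b ω‖ ^ 2 with hg
  have hfmeas : StronglyMeasurable[F b] f := by
    have hsm : StronglyMeasurable[F b] (fun ω => ‖ρ b ω - ρ a ω‖) :=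
      (measurable_norm.comp ((hadapted b).sub ((hadapted a).mono (F.mono hab) le_rfl))).stronglyMeasurable
    simpa [hf, pow_two, Pi.mul_def] using hsm.mul hsm
  have hfbd : ∀ ω, ‖f ω‖ ≤ (2*D)^2 := by
    intro ω
    rw [hf, Real.norm_of_nonneg (by positivity)]
    have : ‖ρ b ω - ρ a ω‖ ≤ 2*D := by
      calc ‖ρ b ω - ρ a ω‖ ≤ ‖ρ b ω‖ + ‖ρ a ω‖ := norm_sub_le _ _
        _ ≤ 2*D := by have := hbdd b ω; have := hbdd a ω; linarith
    exact pow_le_pow_left₀ (norm_nonneg _) this 2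
  have hgbd : ∀ ω, ‖g ω‖ ≤ (2*D)^2 := by
    intro ω
    rw [hg, Real.norm_of_nonneg (by positivity)]
    have : ‖ρ c ω - ρ b ω‖ ≤ 2*D := by
      calc ‖ρ c ω - ρ b ω‖ ≤ ‖ρ c ω‖ + ‖ρ b ω‖ := norm_sub_le _ _
        _ ≤ 2*D := by have := hbdd c ω; have := hbdd b ω; linarith
    exact pow_le_pow_left₀ (norm_nonneg _) this 2
  have hfint : Integrable f μ := by
    refine ⟨(hfmeas.mono (F.le b)).aestronglyMeasurable, ?_⟩
    exact HasFiniteIntegral.of_bounded (ae_of_all _ hfbd)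
  have hgmeas : StronglyMeasurable[mΩ] g := by
    have hsm : StronglyMeasurable[mΩ] (fun ω => ‖ρ c ω - ρ b ω‖) :=
      (measurable_norm.comp (((hadapted c).mono (F.le c) le_rfl).sub ((hadapted b).mono (F.le b) le_rfl))).stronglyMeasurable
    simpa [hg, pow_two, Pi.mul_def] using hsm.mul hsm
  have hgint : Integrable g μ := by
    refine ⟨hgmeas.aestronglyMeasurable, ?_⟩
    exact HasFiniteIntegral.of_bounded (ae_of_all _ hgbd)
  have hfnn : ∀ ω, 0 ≤ f ω := fun ω => by positivity
  -- pull-out property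
  have hpull : μ[f * g|F b] =ᵐ[μ] f * μ[g|F b] :=
    condExp_stronglyMeasurable_mul_of_bound (F.le b) hfmeas hgint _ (ae_of_all _ hfbd)
  have hfcint : Integrable (fun ω => f ω * (μ[g|F b]) ω) μ :=
    Integrable.bdd_mul integrable_condExp (hfmeas.mono (F.le b)).aestronglyMeasurable
      (ae_of_all _ hfbd)
  have h5 : ∫ ω, f ω * g ω ∂μ ≤ (K * ((c:ℝ) - b) / n) * ∫ ω, f ω ∂μ := by
    have e1 : ∫ ω, f ω * g ω ∂μ = ∫ ω, (μ[f * g|F b]) ω ∂μ :=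
      (integral_condExp (F.le b)).symm
    have e2 : ∫ ω, (μ[f * g|F b]) ω ∂μ = ∫ ω, f ω * (μ[g|F b]) ω ∂μ :=
      integral_congr_ae hpull
    rw [e1, e2]
    calc ∫ ω, f ω * (μ[g|F b]) ω ∂μ ≤ ∫ ω, f ω * (K * ((c:ℝ) - b) / n) ∂μ := by
          refine integral_mono_ae hfcint (hfint.mul_const _) ?_
          filter_upwards [hbound b c hbc'] with ω hω
          exact mul_le_mul_of_nonneg_left hω (hfnn ω)
      _ = (K * ((c:ℝ) - b) / n) * ∫ ω, f ω ∂μ := by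
          rw [integral_mul_const, mul_comm]
  have h6 : ∫ ω, f ω ∂μ ≤ K * ((b:ℝ) - a) / n := by
    rw [← integral_condExp (F.le a)]
    calc ∫ ω, (μ[f|F a]) ω ∂μ ≤ ∫ _ω, K * ((b:ℝ) - a) / n ∂μ :=
          integral_mono_ae integrable_condExp (integrable_const _) (hbound a b hab')
      _ = K * ((b:ℝ) - a) / n := by simp
  have hcb0 : 0 ≤ K * ((c:ℝ) - b) / n := by
    have hbcR : (b:ℝ) ≤ c := by exact_mod_cast hbc
    exact div_nonneg (mul_nonneg hK (by linarith)) hn'.le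
  have h7 : ∫ ω, f ω * g ω ∂μ ≤ (K * ((c:ℝ) - b) / n) * (K * ((b:ℝ) - a) / n) :=
    le_trans h5 (mul_le_mul_of_nonneg_left h6 hcb0)
  -- arithmetic bound
  have hcle : (c:ℝ) ≤ n * t₂ := Nat.floor_le (by nlinarith)
  have halt : (n:ℝ) * t₁ < a + 1 := Nat.lt_floor_add_one _
  have hac2 : (a:ℝ) + 2 ≤ c := by
    have : a + 2 ≤ c := by omega
    exact_mod_cast this
  have hca : (c:ℝ) - a ≤ 2 * n * (t₂ - t₁) := by linarith
  have hba : (a:ℝ) ≤ b := by exact_mod_cast hab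
  have hcb : (b:ℝ) ≤ c := by exact_mod_cast hbc
  have hprod : ((c:ℝ) - b) * ((b:ℝ) - a) ≤ (n:ℝ)^2 * (t₂ - t₁)^2 := by
    nlinarith [sq_nonneg ((c:ℝ) + a - 2*b), sq_nonneg ((c:ℝ) - a)]
  have h8 : (K * ((c:ℝ) - b) / n) * (K * ((b:ℝ) - a) / n)
      ≤ 4 * K ^ 2 * (t₂ - t₁) ^ 2 := by
    have e : (K * ((c:ℝ) - b) / n) * (K * ((b:ℝ) - a) / n)
        = K^2 * ((((c:ℝ) - b) * ((b:ℝ) - a)) / (n:ℝ)^2) := by ring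
    rw [e]
    calc K^2 * ((((c:ℝ) - b) * ((b:ℝ) - a)) / (n:ℝ)^2)
        ≤ K^2 * (((n:ℝ)^2 * (t₂ - t₁)^2) / (n:ℝ)^2) := by gcongr
      _ = K^2 * (t₂ - t₁)^2 := by field_simp
      _ ≤ 4 * K ^ 2 * (t₂ - t₁) ^ 2 := by nlinarith [sq_nonneg K, sq_nonneg (t₂ - t₁)]
  have hcomm : ∫ ω, ‖ρ c ω - ρ b ω‖ ^ 2 * ‖ρ b ω - ρ a ω‖ ^ 2 ∂μ
      = ∫ ω, f ω * g ω ∂μ := by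
    apply integral_congr_ae
    filter_upwards with ω
    simp only [hf, hg]
    ring
  rw [hcomm]
  exact le_trans h7 h8
end
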